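/- Let T be the linear operator with dom(T) = dom(D₀) and Tu = D₀(𝓜u) + 𝓝u, and assume there is c > 0 with Re⟨Tu, u⟩ ≥ c‖u‖² for all u ∈ dom(D₀). Let A : dom(A) ⊆ K → K be a densely defined closed linear operator that is maximal monotone, i.e., Re⟨Au, u⟩ ≥ 0 for all u ∈ dom(A) and 1 + A maps dom(A) onto K. Then for every ψ ∈ dom(D₀) ∩ dom(A*): Re⟨−𝓜*(D₀ψ) + 2ν𝓜*ψ + 𝓝*ψ + A*ψ, ψ⟩ ≥ c‖ψ‖². -/

import Mathlib

open Filter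

private lemma reSymm {K : Type*} [NormedAddCommGroup K] [InnerProductSpace ℂ K]
    (x y : K) : (inner ℂ x y : ℂ).re = (inner ℂ y x : ℂ).re := by
  exact inner_re_symm (𝕜 := ℂ) x y

/-- The operator `T` with domain `dom D₀`, `T u = D₀(𝓜 u) + 𝓝 u`. -/
noncomputable def T0 {K : Type*} [NormedAddCommGroup K] [InnerProductSpace ℂ K]
    (D₀ : K →ₗ.[ℂ] K) (Mc N : K →L[ℂ] K)
    (hM : ∀ u ∈ D₀.domain, Mc u ∈ D₀.domain) : K →ₗ.[ℂ] K where
  domain := D₀.domain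
  toFun :=
    D₀.toFun.comp (LinearMap.codRestrict D₀.domain
        ((Mc : K →ₗ[ℂ] K).comp D₀.domain.subtype) (fun u => hM _ u.2))
    + (N : K →ₗ[ℂ] K).comp D₀.domain.subtype

theorem stmt9
    {K : Type*} [NormedAddCommGroup K] [InnerProductSpace ℂ K] [CompleteSpace K]
    (ν : ℝ) (hν : 0 < ν)
    (D₀ : K →ₗ.[ℂ] K) (hD₀dense : Dense (D₀.domain : Set K)) (hD₀closed : D₀.IsClosed)
    -- the adjoint of `D₀` is `2ν - D₀`
    (hadjdom : D₀.adjoint.domain = D₀.domain)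
    (hadjval : ∀ (u : K) (hu : u ∈ D₀.domain) (hu' : u ∈ D₀.adjoint.domain),
      D₀.adjoint ⟨u, hu'⟩ = ((2 * ν : ℝ) : ℂ) • u - D₀ ⟨u, hu⟩)
    (Mc N Mop : K →L[ℂ] K)
    (hMdom : ∀ u ∈ D₀.domain, Mc u ∈ D₀.domain)
    (hMcomm : ∀ u : D₀.domain, Mc (D₀ u) = D₀ ⟨Mc u, hMdom u u.2⟩ + Mop u)
    (c : ℝ) (hc : 0 < c)
    (hpos : ∀ (u : K) (hu : u ∈ D₀.domain),
      c * ‖u‖ ^ 2 ≤ (inner ℂ (T0 D₀ Mc N hMdom ⟨u, hu⟩) u : ℂ).re)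
    -- `A` is densely defined, closed and maximal monotone
    (A : K →ₗ.[ℂ] K) (hAdense : Dense (A.domain : Set K)) (hAclosed : A.IsClosed)
    (hAmono : ∀ u : A.domain, 0 ≤ (inner ℂ (A u) (u : K) : ℂ).re)
    (hAmax : ∀ y : K, ∃ u : A.domain, (u : K) + A u = y) :
    ∀ (ψ : K) (hψd : ψ ∈ D₀.domain) (hψa : ψ ∈ A.adjoint.domain),
      c * ‖ψ‖ ^ 2 ≤ (inner ℂ (-(ContinuousLinearMap.adjoint Mc (D₀ ⟨ψ, hψd⟩))
          + ((2 * ν : ℝ) : ℂ) • ContinuousLinearMap.adjoint Mc ψ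
          + ContinuousLinearMap.adjoint N ψ + A.adjoint ⟨ψ, hψa⟩) ψ : ℂ).re := by
  intro ψ hψd hψa
  -- Step 1: positivity of the adjoint of A
  set a : K := A.adjoint ⟨ψ, hψa⟩ with ha
  have hAform := A.adjoint_isFormalAdjoint hAdense
  obtain ⟨u, hu⟩ := hAmax (ψ - a)
  set w : K := (u : K) with hw
  set b : K := A u with hb
  have hadj : (inner ℂ a w : ℂ) = inner ℂ ψ b := hAform ⟨ψ, hψa⟩ u
  have haval : a = ψ - w - b := by
    rw [sub_sub, eq_sub_iff_add_eq, add_comm]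
    exact eq_sub_iff_add_eq.mp hu
  have hApos : 0 ≤ (inner ℂ a ψ : ℂ).re := by
    have h1 : (inner ℂ a ψ : ℂ).re
        = (inner ℂ ψ ψ : ℂ).re - (inner ℂ w ψ : ℂ).re - (inner ℂ b ψ : ℂ).re := by
      rw [haval]; simp [inner_sub_left]
    have h2 : (inner ℂ b ψ : ℂ).re
        = (inner ℂ ψ w : ℂ).re - (inner ℂ w w : ℂ).re - (inner ℂ b w : ℂ).re := by
      have hsym : (inner ℂ b ψ : ℂ).re = (inner ℂ ψ b : ℂ).re := reSymm _ _
      rw [hsym, ← hadj, haval]; simp [inner_sub_left]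
    have hre1 : (inner ℂ w ψ : ℂ).re = (inner ℂ ψ w : ℂ).re := reSymm _ _
    have hnorm : (0:ℝ) ≤ ‖ψ - w‖ ^ 2 := sq_nonneg _
    have hexp : ‖ψ - w‖ ^ 2
        = (inner ℂ ψ ψ : ℂ).re - 2 * (inner ℂ ψ w : ℂ).re + (inner ℂ w w : ℂ).re := by
      rw [← inner_self_eq_norm_sq (𝕜 := ℂ)]
      simp [inner_sub_left, inner_sub_right, reSymm w ψ]
      simp only [← Complex.ofReal_pow, Complex.ofReal_re]
      have := norm_sub_sq (𝕜 := ℂ) ψ w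
      simp only [RCLike.re_to_complex] at this
      linarith
    have hbw : 0 ≤ (inner ℂ b w : ℂ).re := hAmono u
    rw [h1, h2]
    nlinarith
  -- Step 2: the T0 part
  have hψa' : ψ ∈ D₀.adjoint.domain := hadjdom ▸ hψd
  have hDform := D₀.adjoint_isFormalAdjoint hD₀dense
  have hTval : T0 D₀ Mc N hMdom ⟨ψ, hψd⟩ = D₀ ⟨Mc ψ, hMdom ψ hψd⟩ + N ψ := rfl
  have hDadj : (inner ℂ (D₀.adjoint ⟨ψ, hψa'⟩) (Mc ψ) : ℂ)
      = inner ℂ ψ (D₀ ⟨Mc ψ, hMdom ψ hψd⟩) := hDform ⟨ψ, hψa'⟩ ⟨Mc ψ, hMdom ψ hψd⟩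
  rw [hadjval ψ hψd hψa'] at hDadj
  have hT : c * ‖ψ‖ ^ 2 ≤ (inner ℂ (T0 D₀ Mc N hMdom ⟨ψ, hψd⟩) ψ : ℂ).re := hpos ψ hψd
  rw [hTval] at hT
  have hDre : (inner ℂ (D₀ ⟨Mc ψ, hMdom ψ hψd⟩) ψ : ℂ).re
      = 2 * ν * (inner ℂ ψ (Mc ψ) : ℂ).re - (inner ℂ (D₀ ⟨ψ, hψd⟩) (Mc ψ) : ℂ).re := by
    rw [reSymm, ← hDadj]
    simp [inner_sub_left, inner_smul_left]
    ring
  -- Step 3: assemble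
  have hMadj : ∀ x : K, (inner ℂ (ContinuousLinearMap.adjoint Mc x) ψ : ℂ) = inner ℂ x (Mc ψ) :=
    fun x => ContinuousLinearMap.adjoint_inner_left Mc ψ x
  have hNadj : (inner ℂ (ContinuousLinearMap.adjoint N ψ) ψ : ℂ) = inner ℂ ψ (N ψ) :=
    ContinuousLinearMap.adjoint_inner_left N ψ ψ
  have hNre : (inner ℂ ψ (N ψ) : ℂ).re = (inner ℂ (N ψ) ψ : ℂ).re := reSymm _ _
  have hexpand : (inner ℂ (-(ContinuousLinearMap.adjoint Mc (D₀ ⟨ψ, hψd⟩))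
          + ((2 * ν : ℝ) : ℂ) • ContinuousLinearMap.adjoint Mc ψ
          + ContinuousLinearMap.adjoint N ψ + a) ψ : ℂ).re
      = -(inner ℂ (D₀ ⟨ψ, hψd⟩) (Mc ψ) : ℂ).re + 2 * ν * (inner ℂ ψ (Mc ψ) : ℂ).re
        + (inner ℂ (N ψ) ψ : ℂ).re + (inner ℂ a ψ : ℂ).re := by
    simp [inner_add_left, inner_neg_left, inner_smul_left, hMadj, hNadj, hNre]
    ring
  rw [hexpand]
  have hTre : (inner ℂ (D₀ ⟨Mc ψ, hMdom ψ hψd⟩ + N ψ) ψ : ℂ).re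
      = (inner ℂ (D₀ ⟨Mc ψ, hMdom ψ hψd⟩) ψ : ℂ).re + (inner ℂ (N ψ) ψ : ℂ).re := by
    simp [inner_add_left]
  rw [hTre, hDre] at hT
  linarith
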